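/- There exist a constant C > 0 and integers b₀, q₀ such that for all integers b ≥ b₀ and q ≥ q₀: |(1 − λ₁⁽¹⁾) − 4π²b²/(q²(b²−1)²)| ≤ C·(b^{−4} + b^{−2}q^{−4}). In particular, when b and q are of the same order, the smallest nonzero eigenvalue 1 − λ₁⁽¹⁾ of the normalized Laplacian of the ring of cliques R_{b,q} is O(b^{−2}q^{−2}). -/

import Mathlib

/-- `α_k = 2 cos(2πk/q)`. -/
noncomputable def rocAlpha (q k : ℕ) : ℝ := 2 * Real.cos (2 * Real.pi * k / q)

/-- `β_k = (1/2)(α_k √((b−1)/(b+1)) − √(b²−1) + √((b+1)/(b−1)))`. -/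
noncomputable def rocBeta (b q k : ℕ) : ℝ :=
  (1 / 2) * (rocAlpha q k * Real.sqrt (((b : ℝ) - 1) / ((b : ℝ) + 1)) -
    Real.sqrt ((b : ℝ) ^ 2 - 1) + Real.sqrt (((b : ℝ) + 1) / ((b : ℝ) - 1)))

/-- `ξ₁⁽ᵏ⁾ = β_k + √(β_k² + (b−1))`. -/
noncomputable def rocXi1 (b q k : ℕ) : ℝ :=
  rocBeta b q k + Real.sqrt ((rocBeta b q k) ^ 2 + ((b : ℝ) - 1))

/-- `ξ₂⁽ᵏ⁾ = β_k − √(β_k² + (b−1))`. -/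
noncomputable def rocXi2 (b q k : ℕ) : ℝ :=
  rocBeta b q k - Real.sqrt ((rocBeta b q k) ^ 2 + ((b : ℝ) - 1))

/-- `λ₁⁽ᵏ⁾ = ξ₁⁽ᵏ⁾/√(b²−1) + 1 − 1/(b−1)`. -/
noncomputable def rocLam1 (b q k : ℕ) : ℝ :=
  rocXi1 b q k / Real.sqrt ((b : ℝ) ^ 2 - 1) + 1 - 1 / ((b : ℝ) - 1)

/-- `λ₂⁽ᵏ⁾ = ξ₂⁽ᵏ⁾/√(b²−1) + 1 − 1/(b−1)`. -/
noncomputable def rocLam2 (b q k : ℕ) : ℝ :=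
  rocXi2 b q k / Real.sqrt ((b : ℝ) ^ 2 - 1) + 1 - 1 / ((b : ℝ) - 1)


set_option maxHeartbeats 1000000 in
/-- Key sandwich bound for `F = (δ - (R - R₀))/(2(x+1))`. -/
lemma roc_key (x δ R R₀ u₀ : ℝ) (hx : (20:ℝ) ≤ x) (hδ0 : 0 ≤ δ) (hδ1 : δ ≤ 1)
    (hu₀ : u₀ = x * (x - 3) / (x - 1)) (hR₀ : R₀ = (x ^ 2 - x + 2) / (x - 1))
    (hR0 : 0 ≤ R) (hRsq : R ^ 2 = (u₀ + δ) ^ 2 + 4 * (x + 1)) :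
    δ / (x ^ 2 - x + 2) - δ ^ 2 / (4 * x ^ 2) ≤ (δ - (R - R₀)) / (2 * (x + 1)) ∧
      (δ - (R - R₀)) / (2 * (x + 1)) ≤ δ / (x ^ 2 - x + 2) := by
  have hx1 : (0:ℝ) < x - 1 := by linarith
  have hx2 : (0:ℝ) < x + 1 := by linarith
  have hu₀0 : 0 ≤ u₀ := by
    rw [hu₀]; exact div_nonneg (by nlinarith) (by linarith)
  have hR₀0 : 0 < R₀ := by rw [hR₀]; exact div_pos (by nlinarith) hx1
  have hR₀sq : R₀ ^ 2 = u₀ ^ 2 + 4 * (x + 1) := by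
    rw [hR₀, hu₀]; field_simp; ring
  have hu₀R₀ : u₀ ≤ R₀ := by nlinarith
  have hRgeR₀ : R₀ ≤ R := by nlinarith [sq_nonneg (R - R₀)]
  have hRleR₀δ : R ≤ R₀ + δ := by nlinarith [sq_nonneg (R - R₀ - δ)]
  have hΔeq : (R - R₀) * (R + R₀) = δ * (2 * u₀ + δ) := by
    linear_combination hRsq - hR₀sq
  have hΔ0 : 0 ≤ R - R₀ := by linarith
  have hΔub : (R - R₀) * (2 * R₀) ≤ δ * (2 * u₀ + δ) := by
    nlinarith [sq_nonneg (R - R₀)]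
  have hΔlb : δ * (2 * u₀ + δ) ≤ (R - R₀) * (2 * R₀ + δ) := by
    nlinarith [mul_nonneg hΔ0 (by linarith : (0:ℝ) ≤ R₀ + δ - R)]
  have hP : (x - 1) * R₀ = x ^ 2 - x + 2 := by rw [hR₀]; field_simp
  have hU : (x - 1) * u₀ = x * (x - 3) := by rw [hu₀]; field_simp
  have hPU : (x - 1) * (R₀ - u₀) = 2 * (x + 1) := by nlinarith
  have hQpos : (0:ℝ) < x ^ 2 - x + 2 := by nlinarith
  have hR₀x : x ^ 2 ≤ (x + 1) * R₀ := by
    rw [hR₀, ← mul_div_assoc, le_div_iff₀ hx1]; nlinarith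
  constructor
  · rw [div_sub_div _ _ (ne_of_gt hQpos) (by positivity),
      div_le_div_iff₀ (by positivity) (by linarith)]
    have f1 : (2 * δ * R₀ - 2 * δ * u₀ - δ ^ 2) * (2 * x ^ 2 * (x - 1)) ≤
        ((δ - (R - R₀)) * (2 * R₀)) * (2 * x ^ 2 * (x - 1)) := by
      apply mul_le_mul_of_nonneg_right _ (by nlinarith)
      nlinarith
    have f2 : 2 * δ ^ 2 * (x - 1) * x ^ 2 ≤ 2 * δ ^ 2 * (x - 1) * ((x + 1) * R₀) := by
      apply mul_le_mul_of_nonneg_left hR₀x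
      nlinarith [sq_nonneg δ]
    have e3 : (x - 1) * (R₀ - u₀) * (4 * δ * x ^ 2) = 2 * (x + 1) * (4 * δ * x ^ 2) := by
      rw [hPU]
    have e5 : (δ - (R - R₀)) * ((x ^ 2 - x + 2) * (4 * x ^ 2)) =
        ((δ - (R - R₀)) * (2 * R₀)) * (2 * x ^ 2 * (x - 1)) := by rw [← hP]; ring
    have e6 : (x ^ 2 - x + 2) * δ ^ 2 * (2 * (x + 1)) = 2 * δ ^ 2 * (x - 1) * ((x + 1) * R₀) := by
      rw [← hP]; ring
    nlinarith [f1, f2, e3, e5, e6]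
  · rw [div_le_div_iff₀ (by linarith) hQpos]
    have s1 : (δ - (R - R₀)) * (2 * R₀ + δ) ≤ 2 * δ * (R₀ - u₀) := by nlinarith
    have e1 : ((δ - (R - R₀)) * (2 * R₀ + δ)) * ((x - 1) * R₀) ≤
        (2 * δ * (R₀ - u₀)) * ((x - 1) * R₀) := by
      apply mul_le_mul_of_nonneg_right s1
      nlinarith
    have e2 : (2 * δ * (R₀ - u₀)) * ((x - 1) * R₀) = 2 * δ * R₀ * ((x - 1) * (R₀ - u₀)) := by
      ring
    rw [e2, hPU] at e1
    have e3 : 4 * δ * (x + 1) * R₀ ≤ δ * (2 * (x + 1)) * (2 * R₀ + δ) := by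
      nlinarith [mul_nonneg (mul_nonneg hδ0 (by linarith : (0:ℝ) ≤ x + 1)) hδ0]
    have e4 : (δ - (R - R₀)) * (x ^ 2 - x + 2) * (2 * R₀ + δ) ≤
        δ * (2 * (x + 1)) * (2 * R₀ + δ) := by
      rw [← hP]; nlinarith [e1, e3]
    have hpos : (0:ℝ) < 2 * R₀ + δ := by linarith
    exact le_of_mul_le_mul_right e4 hpos

set_option maxHeartbeats 1000000 in
lemma roc_tail (x qr δ F : ℝ) (hx : (20:ℝ) ≤ x) (hq : (20:ℝ) ≤ qr)
    (hδ0 : 0 ≤ δ) (hδt : |δ - (2 * Real.pi / qr) ^ 2| ≤ (2 * Real.pi / qr) ^ 4)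
    (hFb : |F - δ / (x ^ 2 - x + 2)| ≤ δ ^ 2 / (4 * x ^ 2)) :
    |F - 4 * Real.pi ^ 2 * x ^ 2 / (qr ^ 2 * (x ^ 2 - 1) ^ 2)| ≤
      1000000 * (1 / x ^ 4 + 1 / (x ^ 2 * qr ^ 4)) := by
  have hπ : Real.pi ≤ 4 := Real.pi_le_four
  have hπ0 : 0 < Real.pi := Real.pi_pos
  have hπ2 : Real.pi ^ 2 ≤ 16 := by nlinarith
  have hπ4 : Real.pi ^ 4 ≤ 256 := by nlinarith
  have hq0 : (0:ℝ) < qr := by linarith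
  have hx0 : (0:ℝ) < x := by linarith
  set ϑ : ℝ := 2 * Real.pi / qr with hϑdef
  have hϑ0 : 0 < ϑ := by positivity
  have hϑle : ϑ ≤ 2 / 5 := by
    rw [hϑdef, div_le_iff₀ hq0]; nlinarith
  have hδt' := abs_le.mp hδt
  have hϑ1 : ϑ ^ 2 ≤ 1 := by nlinarith
  have hϑ41 : ϑ ^ 4 ≤ ϑ ^ 2 := by nlinarith [mul_le_mul_of_nonneg_left hϑ1 (sq_nonneg ϑ)]
  have hδub : δ ≤ 2 * ϑ ^ 2 := by nlinarith [hδt'.2]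
  have hQpos : (0:ℝ) < x ^ 2 - x + 2 := by nlinarith
  have hx21 : (0:ℝ) < x ^ 2 - 1 := by nlinarith
  set T : ℝ := 4 * Real.pi ^ 2 * x ^ 2 / (qr ^ 2 * (x ^ 2 - 1) ^ 2) with hTdef
  set Q : ℝ := x ^ 2 - x + 2 with hQdef
  -- piece 2 : |δ/Q - ϑ²/Q| ≤ ϑ⁴/Q
  have b2 : |δ / Q - ϑ ^ 2 / Q| ≤ ϑ ^ 4 / Q := by
    rw [div_sub_div_same, abs_div, abs_of_pos hQpos]
    gcongr
  -- piece 3 : 0 ≤ ϑ²/Q - T ≤ ϑ² * (4/x³)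
  have hk0 : x ^ 2 / (x ^ 2 - 1) ^ 2 ≤ 1 / Q := by
    rw [div_le_div_iff₀ (by positivity) hQpos, hQdef]; nlinarith
  have hk1 : 1 / Q - x ^ 2 / (x ^ 2 - 1) ^ 2 ≤ 4 / x ^ 3 := by
    rw [div_sub_div _ _ (ne_of_gt hQpos) (by positivity),
      div_le_div_iff₀ (by positivity) (by positivity), hQdef]
    nlinarith [sq_nonneg x, sq_nonneg (x - 1), pow_pos hx0 3, pow_pos hx0 2]
  have hT : ϑ ^ 2 / Q - T = ϑ ^ 2 * (1 / Q - x ^ 2 / (x ^ 2 - 1) ^ 2) := by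
    rw [hTdef, hϑdef, hQdef]
    field_simp
    ring
  have b3u : ϑ ^ 2 / Q - T ≤ ϑ ^ 2 * (4 / x ^ 3) := by
    rw [hT]
    exact mul_le_mul_of_nonneg_left hk1 (by positivity)
  have b3l : 0 ≤ ϑ ^ 2 / Q - T := by
    rw [hT]
    exact mul_nonneg (by positivity) (by linarith)
  -- triangle
  have tri : |F - T| ≤ δ ^ 2 / (4 * x ^ 2) + ϑ ^ 4 / Q + (ϑ ^ 2 / Q - T) := by
    have t1 := abs_sub_le F (δ / Q) T
    have t2 := abs_sub_le (δ / Q) (ϑ ^ 2 / Q) T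
    have t3 : |ϑ ^ 2 / Q - T| = ϑ ^ 2 / Q - T := abs_of_nonneg b3l
    calc |F - T| ≤ |F - δ / Q| + |δ / Q - T| := t1
      _ ≤ |F - δ / Q| + (|δ / Q - ϑ ^ 2 / Q| + |ϑ ^ 2 / Q - T|) := by linarith
      _ ≤ δ ^ 2 / (4 * x ^ 2) + ϑ ^ 4 / Q + (ϑ ^ 2 / Q - T) := by
          rw [t3] at *; linarith [hFb, b2]
  -- numeric bounds for each piece
  have A1 : δ ^ 2 / (4 * x ^ 2) ≤ ϑ ^ 4 / x ^ 2 := by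
    rw [div_le_div_iff₀ (by positivity) (by positivity)]
    nlinarith [mul_le_mul hδub hδub hδ0 (by positivity : (0:ℝ) ≤ 2 * ϑ ^ 2), sq_nonneg x,
      pow_pos hx0 2]
  have A2 : ϑ ^ 4 / x ^ 2 ≤ 4096 * (1 / (x ^ 2 * qr ^ 4)) := by
    have e : 4096 * (1 / (x ^ 2 * qr ^ 4)) - ϑ ^ 4 / x ^ 2 =
        (4096 - 16 * Real.pi ^ 4) / (x ^ 2 * qr ^ 4) := by
      rw [hϑdef]; field_simp; ring
    linarith [e, div_nonneg (by nlinarith : (0:ℝ) ≤ 4096 - 16 * Real.pi ^ 4)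
      (by positivity : (0:ℝ) ≤ x ^ 2 * qr ^ 4)]
  have A3 : ϑ ^ 4 / Q ≤ 2 * (ϑ ^ 4 / x ^ 2) := by
    have e : 2 * (ϑ ^ 4 / x ^ 2) - ϑ ^ 4 / Q = ϑ ^ 4 * (2 * Q - x ^ 2) / (x ^ 2 * Q) := by
      field_simp
    have num0 : (0:ℝ) ≤ 2 * Q - x ^ 2 := by rw [hQdef]; nlinarith
    linarith [e, div_nonneg (mul_nonneg (by positivity : (0:ℝ) ≤ ϑ ^ 4) num0)
      (by positivity : (0:ℝ) ≤ x ^ 2 * Q)]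
  have A4 : ϑ ^ 2 * (4 / x ^ 3) ≤ 128 * (1 / x ^ 4) + 128 * (1 / (x ^ 2 * qr ^ 4)) := by
    have e : 128 * (1 / x ^ 4) + 128 * (1 / (x ^ 2 * qr ^ 4)) - ϑ ^ 2 * (4 / x ^ 3) =
        (128 * qr ^ 4 + 128 * x ^ 2 - 16 * Real.pi ^ 2 * x * qr ^ 2) / (x ^ 4 * qr ^ 4) := by
      rw [hϑdef]; field_simp; ring
    have num : (0:ℝ) ≤ 128 * qr ^ 4 + 128 * x ^ 2 - 16 * Real.pi ^ 2 * x * qr ^ 2 := by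
      nlinarith [sq_nonneg (qr ^ 2 - x), mul_pos hx0 (pow_pos hq0 2)]
    linarith [e, div_nonneg num (by positivity : (0:ℝ) ≤ x ^ 4 * qr ^ 4)]
  -- combine
  have hu : (0:ℝ) ≤ 1 / (x ^ 2 * qr ^ 4) := by positivity
  have hv : (0:ℝ) ≤ 1 / x ^ 4 := by positivity
  calc |F - T| ≤ δ ^ 2 / (4 * x ^ 2) + ϑ ^ 4 / Q + (ϑ ^ 2 / Q - T) := tri
    _ ≤ ϑ ^ 4 / x ^ 2 + 2 * (ϑ ^ 4 / x ^ 2) + ϑ ^ 2 * (4 / x ^ 3) := by linarith [A1, A3, b3u]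
    _ ≤ 3 * (4096 * (1 / (x ^ 2 * qr ^ 4))) + (128 * (1 / x ^ 4) + 128 * (1 / (x ^ 2 * qr ^ 4))) := by
        linarith [A2, A4]
    _ ≤ 1000000 * (1 / x ^ 4 + 1 / (x ^ 2 * qr ^ 4)) := by linarith
set_option maxHeartbeats 1000000 in
/-- Bounds on `δ = 2 - 2cos(2π/q)`. -/
lemma roc_delta (qr : ℝ) (hq : (20:ℝ) ≤ qr) :
    0 ≤ 2 - 2 * Real.cos (2 * Real.pi / qr) ∧
    2 - 2 * Real.cos (2 * Real.pi / qr) ≤ 1 ∧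
    |2 - 2 * Real.cos (2 * Real.pi / qr) - (2 * Real.pi / qr) ^ 2| ≤ (2 * Real.pi / qr) ^ 4 := by
  have hπ : Real.pi ≤ 4 := Real.pi_le_four
  have hπ0 : 0 < Real.pi := Real.pi_pos
  have hq0 : (0:ℝ) < qr := by linarith
  set ϑ : ℝ := 2 * Real.pi / qr with hϑdef
  have hϑ0 : 0 < ϑ := by positivity
  have hϑle : ϑ ≤ 2 / 5 := by rw [hϑdef, div_le_iff₀ hq0]; nlinarith
  have hcb := Real.cos_bound (x := ϑ) (by rw [abs_of_pos hϑ0]; linarith)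
  rw [abs_of_pos hϑ0] at hcb
  have hcb' := abs_le.mp hcb
  have hϑ4 : 0 < ϑ ^ 4 := by positivity
  have hδt : |2 - 2 * Real.cos ϑ - ϑ ^ 2| ≤ ϑ ^ 4 := by
    have h1 : 2 - 2 * Real.cos ϑ - ϑ ^ 2 = (-2) * (Real.cos ϑ - (1 - ϑ ^ 2 / 2)) := by ring
    rw [h1, abs_mul, show |(-2:ℝ)| = 2 by norm_num]
    nlinarith [hcb]
  refine ⟨by nlinarith [Real.cos_le_one ϑ], ?_, hδt⟩
  have h2 := (abs_le.mp hδt).2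
  have hϑsq : ϑ ^ 2 ≤ 4 / 25 := by nlinarith
  have hϑ4le : ϑ ^ 4 ≤ 16 / 625 := by nlinarith [hϑsq, sq_nonneg ϑ]
  linarith [h2, hϑsq, hϑ4le]

set_option maxHeartbeats 1000000 in
/-- The smallest nonzero eigenvalue `1 − λ₁⁽¹⁾` of the normalized
Laplacian of the ring of cliques equals `4π²b²/(q²(b²−1)²)` up to an error of order
`b^{−4} + b^{−2}q^{−4}`; in particular, when `b` and `q` are of the same order it is
`O(b^{−2}q^{−2})`. -/
theorem roc_fiedler_value_asymptotics :
    ∃ C : ℝ, 0 < C ∧ ∃ b₀ q₀ : ℕ, ∀ b : ℕ, b₀ ≤ b → ∀ q : ℕ, q₀ ≤ q →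
      |(1 - rocLam1 b q 1) -
        4 * Real.pi ^ 2 * (b : ℝ) ^ 2 / ((q : ℝ) ^ 2 * ((b : ℝ) ^ 2 - 1) ^ 2)| ≤
      C * (1 / (b : ℝ) ^ 4 + 1 / ((b : ℝ) ^ 2 * (q : ℝ) ^ 4)) := by
  refine ⟨1000000, by norm_num, 20, 20, fun b hb q hq => ?_⟩
  set x : ℝ := (b : ℝ) with hxdef
  have hx : (20:ℝ) ≤ x := by { show (20:ℝ) ≤ (b:ℝ); exact_mod_cast hb }
  have hq20 : (20:ℝ) ≤ (q:ℝ) := by exact_mod_cast hq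
  have hx1 : (0:ℝ) < x - 1 := by linarith
  have hx2 : (0:ℝ) < x + 1 := by linarith
  set sa := Real.sqrt (x - 1) with hsadef
  set sb := Real.sqrt (x + 1) with hsbdef
  have hsa : sa ^ 2 = x - 1 := Real.sq_sqrt (le_of_lt hx1)
  have hsb : sb ^ 2 = x + 1 := Real.sq_sqrt (le_of_lt hx2)
  have hsa0 : 0 < sa := Real.sqrt_pos.mpr hx1
  have hsb0 : 0 < sb := Real.sqrt_pos.mpr hx2
  set α := rocAlpha q 1 with hαdef
  set M : ℝ := (x + 1) * (x - 2) / (x - 1) with hMdef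
  have hne1 : x - 1 ≠ 0 := ne_of_gt hx1
  have hne2 : x + 1 ≠ 0 := ne_of_gt hx2
  have hnea : sa ≠ 0 := ne_of_gt hsa0
  have hneb : sb ≠ 0 := ne_of_gt hsb0
  have hs1 : Real.sqrt ((x - 1) / (x + 1)) = sa / sb := Real.sqrt_div (le_of_lt hx1) _
  have hs2 : Real.sqrt ((x + 1) / (x - 1)) = sb / sa := Real.sqrt_div (le_of_lt hx2) _
  have hs3 : Real.sqrt (x ^ 2 - 1) = sa * sb := by
    rw [show x ^ 2 - 1 = (x - 1) * (x + 1) by ring, Real.sqrt_mul (le_of_lt hx1)]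
  have hβ : rocBeta b q 1 = sa / (2 * sb) * (α - M) := by
    rw [rocBeta, ← hxdef, ← hαdef, hs1, hs2, hs3, hMdef]
    field_simp
    linear_combination (-(x+1)) * hsa + ((x-1)*(1-sa^2)) * hsb
  have h4 : (sa / (2 * sb)) ^ 2 = (x - 1) / (4 * (x + 1)) := by
    rw [div_pow, hsa, mul_pow, hsb]; norm_num
  have hβsq : (rocBeta b q 1) ^ 2 + (x - 1) = (x - 1) / (4 * (x + 1)) * ((α - M) ^ 2 + 4 * (x + 1)) := by
    rw [hβ, mul_pow, h4]; field_simp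
  set R := Real.sqrt ((α - M) ^ 2 + 4 * (x + 1)) with hRdef
  have hRin : (0:ℝ) ≤ (α - M) ^ 2 + 4 * (x + 1) := by positivity
  have hsqrtβ : Real.sqrt ((rocBeta b q 1) ^ 2 + (x - 1)) = sa / (2 * sb) * R := by
    rw [hβsq, Real.sqrt_mul (by positivity), Real.sqrt_div (le_of_lt hx1),
      show (4:ℝ) * (x + 1) = (2 * sb)^2 by rw [mul_pow, hsb]; ring,
      Real.sqrt_sq (by positivity),
      show (2*sb)^2 = 4*(x+1) by rw [mul_pow, hsb]; ring]
  have hxi : rocXi1 b q 1 = sa / (2 * sb) * ((α - M) + R) := by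
    rw [rocXi1, ← hxdef, hsqrtβ, hβ]; ring
  have hlam : rocLam1 b q 1 = ((α - M) + R) / (2 * (x + 1)) + 1 - 1 / (x - 1) := by
    rw [rocLam1, ← hxdef, hxi, hs3]
    have : sa / (2 * sb) * ((α - M) + R) / (sa * sb) = ((α - M) + R) / (2 * (x + 1)) := by
      rw [← hsb]; field_simp
    rw [this]
  clear_value R
  obtain ⟨δ, hδdef⟩ : ∃ d : ℝ, d = 2 - α := ⟨_, rfl⟩
  obtain ⟨u₀, hu₀def⟩ : ∃ u : ℝ, u = x * (x - 3) / (x - 1) := ⟨_, rfl⟩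
  obtain ⟨R₀, hR₀def⟩ : ∃ r : ℝ, r = (x ^ 2 - x + 2) / (x - 1) := ⟨_, rfl⟩
  have hMα : α - M = -(u₀ + δ) := by rw [hMdef, hu₀def, hδdef]; field_simp; ring
  have hF : 1 - rocLam1 b q 1 = (δ - (R - R₀)) / (2 * (x + 1)) := by
    rw [hlam, hMα, hu₀def, hR₀def]
    field_simp
    ring
  have hR0 : 0 ≤ R := by rw [hRdef]; exact Real.sqrt_nonneg _
  have hRsq : R ^ 2 = (u₀ + δ) ^ 2 + 4 * (x + 1) := by
    rw [hRdef, Real.sq_sqrt hRin, hMα]; ring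
  -- δ facts
  have hδform : δ = 2 - 2 * Real.cos (2 * Real.pi / (q:ℝ)) := by
    rw [hδdef, hαdef, rocAlpha]
    norm_num
  obtain ⟨hδ0, hδ1, hδt⟩ := roc_delta (q:ℝ) hq20
  rw [← hδform] at hδ0 hδ1 hδt
  -- sandwich
  obtain ⟨klo, khi⟩ := roc_key x δ R R₀ u₀ hx hδ0 hδ1 hu₀def hR₀def hR0 hRsq
  have hnn : (0:ℝ) ≤ δ ^ 2 / (4 * x ^ 2) := by positivity
  have hFb : |(1 - rocLam1 b q 1) - δ / (x ^ 2 - x + 2)| ≤ δ ^ 2 / (4 * x ^ 2) := by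
    rw [hF]
    exact abs_le.mpr ⟨by linarith, by linarith⟩
  exact roc_tail x (q:ℝ) δ _ hx hq20 hδ0 hδt hFb
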